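/- Let W = S_n ⋉ (ℤ/2ℤ)ⁿ be the Weyl group of type C_n acting on characters of M = (ℤ/2ℤ)ⁿ, and for 1 ≤ p ≤ n let δ_p be the character given by the product of the last p coordinates. Then δ_p(m_{ε_i ± ε_j}) = 1 if and only if either 1 ≤ i < j ≤ n−p or n−p+1 ≤ i < j ≤ n, and δ_p(m_{2ε_k}) = 1 if and only if 1 ≤ k ≤ n−p; hence the good roots for δ_p are Δ_{δ_p} = {±ε_i ± ε_j}_{1 ≤ i < j ≤ n−p} ∪ {±2ε_k}_{1 ≤ k ≤ n−p} ∪ {±ε_i ± ε_j}_{n−p+1 ≤ i < j ≤ n}, a root system of type C_{n−p} + D_p; the group W_{δ_p}⁰ = W(Δ_{δ_p}) equals W(C_{n−p}) × W(D_p); the stabilizer W_{δ_p} of δ_p in W equals W(C_{n−p}) × W(C_p); and the R-group R_{δ_p} = W_{δ_p}/W_{δ_p}⁰ is isomorphic to ℤ/2ℤ. -/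

import Mathlib

open Equiv

namespace Sp2n

/-- Precomposition with a permutation of the index set, as a multiplicative automorphism
of `(Fin n → ℤˣ)`. -/
def permMulEquiv (n : ℕ) (σ : Equiv.Perm (Fin n)) :
    (Fin n → ℤˣ) ≃* (Fin n → ℤˣ) where
  toFun f := f ∘ σ
  invFun f := f ∘ σ.symm
  left_inv f := by funext i; simp
  right_inv f := by funext i; simp
  map_mul' f g := rfl

/-- The homomorphism `Perm (Fin n) →* MulAut (Fin n → ℤˣ)` giving the Weyl group of type
`C_n` as a semidirect product (signed permutations). -/
def permHom (n : ℕ) : Equiv.Perm (Fin n) →* MulAut (Fin n → ℤˣ) where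
  toFun σ := permMulEquiv n σ⁻¹
  map_one' := by
    apply MulEquiv.ext; intro f; funext i
    simp [permMulEquiv]
  map_mul' σ τ := by
    apply MulEquiv.ext; intro f; funext i
    simp [permMulEquiv, mul_inv_rev]

@[simp] lemma permHom_apply (n : ℕ) (σ : Equiv.Perm (Fin n)) (f : Fin n → ℤˣ) :
    (permHom n σ) f = f ∘ ⇑σ⁻¹ := rfl

/-- The Weyl group `W = S_n ⋉ (ℤ/2ℤ)ⁿ` of type `C_n`, realized as signed permutations. -/
abbrev W (n : ℕ) := SemidirectProduct (Fin n → ℤˣ) (Equiv.Perm (Fin n)) (permHom n)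

/-- Characters of `M = (ℤ/2ℤ)ⁿ` (realized as `Fin n → ℤˣ`), with values in `ℤˣ = {±1}`. -/
def MChar (n : ℕ) := (Fin n → ℤˣ) → ℤˣ

instance (n : ℕ) : SMul (Equiv.Perm (Fin n)) (MChar n) :=
  ⟨fun σ δ => fun lam => δ (fun i => lam (σ i))⟩

@[simp] lemma perm_smul_apply (n : ℕ) (σ : Equiv.Perm (Fin n)) (δ : MChar n)
    (lam : Fin n → ℤˣ) : (σ • δ) lam = δ (fun i => lam (σ i)) := rfl

instance (n : ℕ) : MulAction (Equiv.Perm (Fin n)) (MChar n) where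
  one_smul δ := by funext lam; simp
  mul_smul σ τ δ := by funext lam; simp [Equiv.Perm.mul_apply]

/-- The Weyl group acts on characters of `M` through its permutation part. -/
instance (n : ℕ) : MulAction (W n) (MChar n) :=
  MulAction.compHom _ (SemidirectProduct.rightHom)

/-- The character `δ_p` of `M`: the product of the last `p` coordinates. -/
def deltaP (n p : ℕ) : MChar n :=
  fun lam => ∏ j : Fin n, if n - p ≤ (j : ℕ) then lam j else 1

/-- The element `m_{ε_i ± ε_j}` of `M`: `−1` in coordinates `i` and `j`, `1` elsewhere. -/
def mPM (n : ℕ) (i j : Fin n) : Fin n → ℤˣ :=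
  fun t => if t = i ∨ t = j then -1 else 1

/-- The element `m_{2ε_k}` of `M`: `−1` in coordinate `k`, `1` elsewhere. -/
def mLong (n : ℕ) (k : Fin n) : Fin n → ℤˣ :=
  fun t => if t = k then -1 else 1

/-- The coordinate vector `ε_i`. -/
def eVec (n : ℕ) (i : Fin n) : Fin n → ℤ := Pi.single i 1

/-- The roots of type `C_n`: `±ε_i ± ε_j` (`i ≠ j`) and `±2ε_k`. -/
def CRoots (n : ℕ) : Set (Fin n → ℤ) :=
  {v | (∃ i j : Fin n, i ≠ j ∧
          (v = eVec n i + eVec n j ∨ v = eVec n i - eVec n j ∨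
           v = -(eVec n i + eVec n j) ∨ v = -(eVec n i - eVec n j))) ∨
       (∃ k : Fin n, v = 2 • eVec n k ∨ v = -(2 • eVec n k))}

/-- The element `m_α ∈ M` attached to a root `α`: `−1` on the support of `α`. -/
def mOf (n : ℕ) (v : Fin n → ℤ) : Fin n → ℤˣ :=
  fun t => if v t = 0 then 1 else -1

/-- `i` and `j` lie in the same block: both in `{1,…,n−p}` or both in `{n−p+1,…,n}`
(0-indexed: both `< n−p` or both `≥ n−p`). -/
def sameBlock (n p : ℕ) (i j : Fin n) : Prop :=
  ((i : ℕ) < n - p ∧ (j : ℕ) < n - p) ∨ (n - p ≤ (i : ℕ) ∧ n - p ≤ (j : ℕ))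

/-- The explicit set `{±ε_i±ε_j}_{i<j≤n−p} ∪ {±2ε_k}_{k≤n−p} ∪ {±ε_i±ε_j}_{n−p<i<j}`,
a root system of type `C_{n−p} + D_p`. -/
def explicitGoodRoots (n p : ℕ) : Set (Fin n → ℤ) :=
  {v | (∃ i j : Fin n, i ≠ j ∧ sameBlock n p i j ∧
          (v = eVec n i + eVec n j ∨ v = eVec n i - eVec n j ∨
           v = -(eVec n i + eVec n j) ∨ v = -(eVec n i - eVec n j))) ∨
       (∃ k : Fin n, (k : ℕ) < n - p ∧ (v = 2 • eVec n k ∨ v = -(2 • eVec n k)))}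

/-- The reflection `s_{ε_i − ε_j}` (for `plus = false`) resp. `s_{ε_i + ε_j}`
(for `plus = true`) as a signed permutation. -/
def sShort (n : ℕ) (i j : Fin n) (plus : Bool) : W n :=
  ⟨if plus then mPM n i j else 1, Equiv.swap i j⟩

/-- The reflection `s_{2ε_k}` as a signed permutation (a sign change at `k`). -/
def sLong (n : ℕ) (k : Fin n) : W n := ⟨mLong n k, 1⟩

/-- The reflections through the good roots for `δ_p` (the roots `α` with
`δ_p(m_α) = 1`). -/
def goodReflections (n p : ℕ) : Set (W n) :=
  {w | ∃ i j : Fin n, i ≠ j ∧ deltaP n p (mPM n i j) = 1 ∧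
        (w = sShort n i j true ∨ w = sShort n i j false)} ∪
  {w | ∃ k : Fin n, deltaP n p (mLong n k) = 1 ∧ w = sLong n k}

/-- A signed permutation preserves the two blocks of coordinates. -/
def blockPreserving (n p : ℕ) (w : W n) : Prop :=
  ∀ i : Fin n, (n - p ≤ (i : ℕ) ↔ n - p ≤ ((w.right i : Fin n) : ℕ))

/-- A signed permutation has an even number of sign changes on the last block. -/
def evenLastSigns (n p : ℕ) (w : W n) : Prop :=
  (∏ j : Fin n, if n - p ≤ (j : ℕ) then w.left j else 1) = 1
section Aux

variable {n p : ℕ}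

lemma deltaP_mul (f g : Fin n → ℤˣ) :
    deltaP n p (f * g) = deltaP n p f * deltaP n p g := by
  unfold deltaP
  rw [← Finset.prod_mul_distrib]
  refine Finset.prod_congr rfl fun j _ => ?_
  by_cases h : n - p ≤ (j : ℕ) <;> simp [h]

lemma deltaP_one : deltaP n p (1 : Fin n → ℤˣ) = 1 := by
  unfold deltaP; simp

lemma deltaP_single (k : Fin n) (x : ℤˣ) :
    deltaP n p (fun t => if t = k then x else 1) =
      if n - p ≤ (k : ℕ) then x else 1 := by
  unfold deltaP
  rw [show (fun j : Fin n => if n - p ≤ (j : ℕ) then (if j = k then x else 1) else 1)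
      = fun j : Fin n => if j = k then (if n - p ≤ (k : ℕ) then x else 1) else 1 by
    funext j
    by_cases hj : j = k
    · subst hj; simp
    · simp [hj]]
  simp [Finset.prod_ite_eq']

lemma mPM_eq (i j : Fin n) (hij : i ≠ j) :
    mPM n i j = (fun t => if t = i then (-1 : ℤˣ) else 1) *
      (fun t => if t = j then (-1 : ℤˣ) else 1) := by
  funext t
  by_cases hi : t = i
  · subst hi; simp [mPM, hij]
  · by_cases hj : t = j
    · subst hj; simp [mPM, hi]
    · simp [mPM, hi, hj]

lemma deltaP_mPM (i j : Fin n) (hij : i ≠ j) :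
    deltaP n p (mPM n i j) =
      (if n - p ≤ (i : ℕ) then (-1 : ℤˣ) else 1) *
      (if n - p ≤ (j : ℕ) then (-1 : ℤˣ) else 1) := by
  rw [mPM_eq i j hij, deltaP_mul, deltaP_single, deltaP_single]

lemma mLong_eq (k : Fin n) : mLong n k = (fun t => if t = k then (-1 : ℤˣ) else 1) := rfl

lemma deltaP_mLong (k : Fin n) :
    deltaP n p (mLong n k) = if n - p ≤ (k : ℕ) then (-1 : ℤˣ) else 1 := by
  rw [mLong_eq, deltaP_single]

lemma deltaP_mPM_iff (i j : Fin n) (hij : i ≠ j) :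
    deltaP n p (mPM n i j) = 1 ↔ sameBlock n p i j := by
  rw [deltaP_mPM i j hij]
  unfold sameBlock
  by_cases hi : n - p ≤ (i : ℕ) <;> by_cases hj : n - p ≤ (j : ℕ) <;>
    simp [hi, hj, Nat.lt_iff_add_one_le, Nat.not_le.symm] <;> omega

lemma deltaP_mLong_iff (k : Fin n) :
    deltaP n p (mLong n k) = 1 ↔ (k : ℕ) < n - p := by
  rw [deltaP_mLong]
  by_cases hk : n - p ≤ (k : ℕ) <;> simp [hk] <;> omega

end Aux
section Aux2

variable {n p : ℕ}

lemma eVec_apply (i t : Fin n) : eVec n i t = if t = i then 1 else 0 := by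
  simp [eVec, Pi.single_apply]

lemma mOf_neg (v : Fin n → ℤ) : mOf n (-v) = mOf n v := by
  funext t; simp [mOf]

lemma mOf_add (i j : Fin n) (hij : i ≠ j) :
    mOf n (eVec n i + eVec n j) = mPM n i j := by
  funext t
  simp only [mOf, mPM, Pi.add_apply, eVec_apply]
  by_cases hi : t = i
  · subst hi; simp [hij]
  · by_cases hj : t = j <;> simp [hi, hj, Ne.symm hij]

lemma mOf_sub (i j : Fin n) (hij : i ≠ j) :
    mOf n (eVec n i - eVec n j) = mPM n i j := by
  funext t
  simp only [mOf, mPM, Pi.sub_apply, eVec_apply]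
  by_cases hi : t = i
  · subst hi; simp [hij]
  · by_cases hj : t = j <;> simp [hi, hj, Ne.symm hij]

lemma mOf_long (k : Fin n) : mOf n (2 • eVec n k) = mLong n k := by
  funext t
  simp only [mOf, mLong, Pi.smul_apply, eVec_apply, smul_eq_mul]
  by_cases hk : t = k <;> simp [hk]

lemma sameBlock_symm {i j : Fin n} (h : sameBlock n p i j) : sameBlock n p j i := by
  unfold sameBlock at *; tauto

lemma goodSet_eq (hp1 : 1 ≤ p) (hpn : p ≤ n) :
    {v ∈ CRoots n | deltaP n p (mOf n v) = 1} = explicitGoodRoots n p := by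
  ext v
  simp only [Set.mem_setOf_eq, CRoots, explicitGoodRoots, Set.mem_setOf_eq]
  constructor
  · rintro ⟨h, hd⟩
    rcases h with ⟨i, j, hij, hv⟩ | ⟨k, hv⟩
    · left
      refine ⟨i, j, hij, ?_, hv⟩
      rw [← deltaP_mPM_iff i j hij, ← hd]
      congr 1
      rcases hv with rfl | rfl | rfl | rfl
      · rw [mOf_add i j hij]
      · rw [mOf_sub i j hij]
      · rw [mOf_neg, mOf_add i j hij]
      · rw [mOf_neg, mOf_sub i j hij]
    · right
      refine ⟨k, ?_, hv⟩
      rw [← deltaP_mLong_iff, ← hd]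
      congr 1
      rcases hv with rfl | rfl
      · rw [mOf_long]
      · rw [mOf_neg, mOf_long]
  · rintro (⟨i, j, hij, hb, hv⟩ | ⟨k, hk, hv⟩)
    · have hm : mOf n v = mPM n i j := by
        rcases hv with rfl | rfl | rfl | rfl
        · rw [mOf_add i j hij]
        · rw [mOf_sub i j hij]
        · rw [mOf_neg, mOf_add i j hij]
        · rw [mOf_neg, mOf_sub i j hij]
      refine ⟨Or.inl ⟨i, j, hij, hv⟩, ?_⟩
      rw [hm, deltaP_mPM_iff i j hij]; exact hb
    · have hm : mOf n v = mLong n k := by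
        rcases hv with rfl | rfl
        · rw [mOf_long]
        · rw [mOf_neg, mOf_long]
      refine ⟨Or.inr ⟨k, hv⟩, ?_⟩
      rw [hm, deltaP_mLong_iff]; exact hk

end Aux2
section Aux3

variable {n p : ℕ}

/-- Block preservation for a permutation. -/
def pbp (n p : ℕ) (σ : Equiv.Perm (Fin n)) : Prop :=
  ∀ i : Fin n, n - p ≤ (i : ℕ) ↔ n - p ≤ ((σ i : Fin n) : ℕ)

lemma blockPreserving_iff (w : W n) : blockPreserving n p w ↔ pbp n p w.right := Iff.rfl

lemma evenLastSigns_iff (w : W n) : evenLastSigns n p w ↔ deltaP n p w.left = 1 := Iff.rfl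

lemma pbp_one : pbp n p 1 := fun _ => Iff.rfl

lemma pbp_mul {σ τ : Equiv.Perm (Fin n)} (hσ : pbp n p σ) (hτ : pbp n p τ) :
    pbp n p (σ * τ) := fun i => (hτ i).trans (hσ (τ i))

lemma pbp_inv {σ : Equiv.Perm (Fin n)} (hσ : pbp n p σ) : pbp n p σ⁻¹ := by
  intro i
  have := hσ (σ⁻¹ i)
  simpa using this.symm

lemma pbp_swap {i j : Fin n} (h : sameBlock n p i j) : pbp n p (Equiv.swap i j) := by
  intro t
  rcases h with ⟨hi, hj⟩ | ⟨hi, hj⟩ <;>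
  · by_cases hti : t = i
    · subst hti; rw [Equiv.swap_apply_left]; omega
    · by_cases htj : t = j
      · subst htj; rw [Equiv.swap_apply_right]; omega
      · rw [Equiv.swap_apply_of_ne_of_ne hti htj]

lemma deltaP_comp {σ : Equiv.Perm (Fin n)} (hσ : pbp n p σ) (g : Fin n → ℤˣ) :
    deltaP n p (fun j => g (σ j)) = deltaP n p g := by
  unfold deltaP
  calc (∏ j : Fin n, if n - p ≤ (j : ℕ) then g (σ j) else 1)
      = ∏ j : Fin n, (fun t : Fin n => if n - p ≤ (t : ℕ) then g t else 1) (σ j) := by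
        refine Finset.prod_congr rfl fun j _ => ?_
        simp only
        by_cases hj : n - p ≤ (j : ℕ)
        · rw [if_pos hj, if_pos ((hσ j).mp hj)]
        · rw [if_neg hj, if_neg (fun hc => hj ((hσ j).mpr hc))]
    _ = ∏ j : Fin n, if n - p ≤ (j : ℕ) then g j else 1 :=
        Equiv.prod_comp σ (fun t : Fin n => if n - p ≤ (t : ℕ) then g t else 1)

lemma deltaP_inv (f : Fin n → ℤˣ) : deltaP n p f⁻¹ = (deltaP n p f)⁻¹ := by
  rw [eq_inv_iff_mul_eq_one, ← deltaP_mul, inv_mul_cancel, deltaP_one]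

lemma deltaP_permHom {σ : Equiv.Perm (Fin n)} (hσ : pbp n p σ) (g : Fin n → ℤˣ) :
    deltaP n p (permHom n σ g) = deltaP n p g := by
  rw [permHom_apply]
  exact deltaP_comp (pbp_inv hσ) g

/-- The subgroup `W(C_{n-p}) × W(D_p)` of block-preserving signed permutations with evenly
many sign changes on the last block. -/
def bigSub (n p : ℕ) : Subgroup (W n) where
  carrier := {w : W n | blockPreserving n p w ∧ evenLastSigns n p w}
  one_mem' := by
    refine ⟨?_, ?_⟩
    · rw [blockPreserving_iff, SemidirectProduct.one_right]; exact pbp_one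
    · rw [evenLastSigns_iff, SemidirectProduct.one_left]; exact deltaP_one
  mul_mem' := by
    rintro a b ⟨ha1, ha2⟩ ⟨hb1, hb2⟩
    rw [blockPreserving_iff] at ha1 hb1
    rw [evenLastSigns_iff] at ha2 hb2
    refine ⟨?_, ?_⟩
    · rw [blockPreserving_iff, SemidirectProduct.mul_right]
      exact pbp_mul ha1 hb1
    · rw [evenLastSigns_iff, SemidirectProduct.mul_left, deltaP_mul,
        deltaP_permHom ha1, ha2, hb2, one_mul]
  inv_mem' := by
    rintro a ⟨ha1, ha2⟩
    rw [blockPreserving_iff] at ha1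
    rw [evenLastSigns_iff] at ha2
    refine ⟨?_, ?_⟩
    · rw [blockPreserving_iff, SemidirectProduct.inv_right]
      exact pbp_inv ha1
    · rw [evenLastSigns_iff, SemidirectProduct.inv_left,
        deltaP_permHom (pbp_inv ha1), deltaP_inv, ha2, inv_one]

lemma mem_bigSub {w : W n} :
    w ∈ bigSub n p ↔ pbp n p w.right ∧ deltaP n p w.left = 1 := Iff.rfl

lemma sameBlock_of_iff {i j : Fin n} (h : n - p ≤ (i : ℕ) ↔ n - p ≤ (j : ℕ)) :
    sameBlock n p i j := by
  unfold sameBlock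
  by_cases hi : n - p ≤ (i : ℕ)
  · right; exact ⟨hi, h.mp hi⟩
  · left; omega

lemma goodReflections_subset_bigSub :
    goodReflections n p ⊆ (bigSub n p : Set (W n)) := by
  rintro w (⟨i, j, hij, hd, hw⟩ | ⟨k, hd, hw⟩)
  · have hb : sameBlock n p i j := (deltaP_mPM_iff i j hij).mp hd
    rcases hw with rfl | rfl
    · exact ⟨pbp_swap hb, hd⟩
    · exact ⟨pbp_swap hb, deltaP_one⟩
  · subst hw
    exact ⟨pbp_one, hd⟩

lemma closure_le_bigSub : Subgroup.closure (goodReflections n p) ≤ bigSub n p :=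
  (Subgroup.closure_le _).mpr goodReflections_subset_bigSub

end Aux3
section Aux4

variable {n p : ℕ}

lemma W_smul_def (w : W n) (δ : MChar n) : w • δ = w.right • δ := rfl

lemma neg_one_ne_one : (-1 : ℤˣ) ≠ 1 := by decide

lemma mem_stabilizer_iff_bp (w : W n) :
    w ∈ MulAction.stabilizer (W n) (deltaP n p) ↔ blockPreserving n p w := by
  rw [MulAction.mem_stabilizer_iff, W_smul_def, blockPreserving_iff]
  constructor
  · intro h i
    have h1 := congrFun h (mLong n (w.right i))
    rw [perm_smul_apply] at h1
    have h2 : (fun t => mLong n (w.right i) (w.right t))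
        = fun t : Fin n => if t = i then (-1 : ℤˣ) else 1 := by
      funext t
      simp only [mLong]
      by_cases ht : t = i
      · subst ht; simp
      · rw [if_neg ht, if_neg (fun hc => ht (w.right.injective hc))]
    rw [h2, deltaP_single, mLong_eq, deltaP_single] at h1
    by_cases hi : n - p ≤ (i : ℕ) <;>
      by_cases hwi : n - p ≤ ((w.right i : Fin n) : ℕ)
    · exact iff_of_true hi hwi
    · rw [if_pos hi, if_neg hwi] at h1
      exact absurd h1 neg_one_ne_one
    · rw [if_neg hi, if_pos hwi] at h1
      exact absurd h1.symm neg_one_ne_one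
    · exact iff_of_false hi hwi
  · intro h
    funext lam
    rw [perm_smul_apply]
    exact deltaP_comp h lam

lemma inr_swap_mem {i j : Fin n} (hij : i ≠ j) (hb : sameBlock n p i j) :
    SemidirectProduct.inr (Equiv.swap i j) ∈ Subgroup.closure (goodReflections n p) := by
  apply Subgroup.subset_closure
  left
  exact ⟨i, j, hij, (deltaP_mPM_iff i j hij).mpr hb, Or.inr rfl⟩

lemma inr_mem_closure_aux :
    ∀ (m : ℕ) (σ : Equiv.Perm (Fin n)), σ.support.card ≤ m → pbp n p σ →
      SemidirectProduct.inr σ ∈ Subgroup.closure (goodReflections n p) := by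
  intro m
  induction m with
  | zero =>
    intro σ hc _
    have h1 : σ = 1 := by
      rw [← Equiv.Perm.card_support_eq_zero]; omega
    rw [h1, map_one]; exact one_mem _
  | succ m ih =>
    intro σ hc hσ
    by_cases h1 : σ = 1
    · rw [h1, map_one]; exact one_mem _
    · obtain ⟨x, hx⟩ : ∃ x, σ x ≠ x := by
        by_contra h; push_neg at h; exact h1 (Equiv.ext h)
      have hcard := Equiv.Perm.card_support_swap_mul (f := σ) (x := x) hx
      have hsb : sameBlock n p x (σ x) := sameBlock_of_iff (hσ x)
      have hswap := inr_swap_mem (n := n) (p := p) (Ne.symm hx) hsb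
      have hrec : SemidirectProduct.inr (Equiv.swap x (σ x) * σ) ∈
          Subgroup.closure (goodReflections n p) :=
        ih _ (by omega) (pbp_mul (pbp_swap hsb) hσ)
      have hdec : σ = Equiv.swap x (σ x) * (Equiv.swap x (σ x) * σ) := by
        rw [← mul_assoc, Equiv.swap_mul_self, one_mul]
      rw [hdec, map_mul]
      exact mul_mem hswap hrec

lemma inl_mPM_mem {i j : Fin n} (hij : i ≠ j) (hb : sameBlock n p i j) :
    SemidirectProduct.inl (mPM n i j) ∈ Subgroup.closure (goodReflections n p) := by
  have hd : deltaP n p (mPM n i j) = 1 := (deltaP_mPM_iff i j hij).mpr hb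
  have h1 : sShort n i j true ∈ Subgroup.closure (goodReflections n p) :=
    Subgroup.subset_closure (Or.inl ⟨i, j, hij, hd, Or.inl rfl⟩)
  have h2 : sShort n i j false ∈ Subgroup.closure (goodReflections n p) :=
    Subgroup.subset_closure (Or.inl ⟨i, j, hij, hd, Or.inr rfl⟩)
  have heq : SemidirectProduct.inl (mPM n i j) = sShort n i j true * sShort n i j false := by
    ext
    · simp [sShort]
    · simp [sShort, Equiv.swap_mul_self]
  rw [heq]
  exact mul_mem h1 h2

lemma mulSingle_eq_ite (k : Fin n) (x : ℤˣ) :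
    Pi.mulSingle k x = fun t : Fin n => if t = k then x else 1 := by
  funext t; rw [Pi.mulSingle_apply]

lemma inl_single_mem {k : Fin n} (hk : (k : ℕ) < n - p) :
    SemidirectProduct.inl (Pi.mulSingle k (-1 : ℤˣ)) ∈
      Subgroup.closure (goodReflections n p) := by
  have hd : deltaP n p (mLong n k) = 1 := (deltaP_mLong_iff k).mpr (by omega)
  have heq : SemidirectProduct.inl (Pi.mulSingle k (-1 : ℤˣ)) = sLong n k := by
    ext
    · rw [mulSingle_eq_ite]; rfl
    · rfl
  rw [heq]
  exact Subgroup.subset_closure (Or.inr ⟨k, hd, rfl⟩)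

lemma single_sq (i : Fin n) :
    (Pi.mulSingle i (-1 : ℤˣ) : Fin n → ℤˣ) * Pi.mulSingle i (-1 : ℤˣ) = (1 : Fin n → ℤˣ) := by
  funext t
  simp only [Pi.mul_apply, Pi.mulSingle_apply, Pi.one_apply]
  by_cases ht : t = i <;> simp [ht]

lemma inl_first_mem_aux :
    ∀ (m : ℕ) (g : Fin n → ℤˣ), (∀ t : Fin n, n - p ≤ (t : ℕ) → g t = 1) →
      (Finset.univ.filter (fun t => g t = -1)).card ≤ m →
      SemidirectProduct.inl g ∈ Subgroup.closure (goodReflections n p) := by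
  intro m
  induction m with
  | zero =>
    intro g _ hc
    have h1 : g = 1 := by
      funext t
      rcases Int.units_eq_one_or (g t) with h' | h'
      · exact h'
      · exfalso
        have ht : t ∈ Finset.univ.filter (fun t => g t = -1) := by simp [h']
        have := Finset.card_pos.mpr ⟨t, ht⟩
        omega
    rw [h1, map_one]; exact one_mem _
  | succ m ih =>
    intro g hg hc
    by_cases hemp : (Finset.univ.filter (fun t => g t = -1)) = ∅
    · have h1 : g = 1 := by
        funext t
        rcases Int.units_eq_one_or (g t) with h' | h'
        · exact h'
        · exfalso
          have ht : t ∈ Finset.univ.filter (fun t => g t = -1) := by simp [h']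
          rw [hemp] at ht
          exact absurd ht (Finset.notMem_empty t)
      rw [h1, map_one]; exact one_mem _
    · obtain ⟨i, hi⟩ := Finset.nonempty_iff_ne_empty.mpr hemp
      have hiv : g i = -1 := by simpa using hi
      have hin : (i : ℕ) < n - p := by
        by_contra hc'
        rw [hg i (by omega)] at hiv
        exact neg_one_ne_one hiv.symm
      set g' := g * Pi.mulSingle i (-1 : ℤˣ) with hg'
      have hval : ∀ t : Fin n, g' t = g t * (if t = i then -1 else 1) := by
        intro t
        simp only [hg', Pi.mul_apply, Pi.mulSingle_apply]
      have hfirst' : ∀ t : Fin n, n - p ≤ (t : ℕ) → g' t = 1 := by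
        intro t ht
        have hti : ¬ t = i := by rintro rfl; omega
        rw [hval t, if_neg hti, hg t ht, mul_one]
      have hsub : (Finset.univ.filter (fun t => g' t = -1)) ⊆
          (Finset.univ.filter (fun t => g t = -1)).erase i := by
        intro t ht
        simp only [Finset.mem_filter, Finset.mem_univ, true_and] at ht
        rw [hval t] at ht
        by_cases hti : t = i
        · exfalso; subst hti
          rw [if_pos rfl, hiv] at ht
          exact absurd ht (by decide)
        · rw [if_neg hti, mul_one] at ht
          exact Finset.mem_erase.mpr ⟨hti, by simp [ht]⟩
      have hmem : i ∈ Finset.univ.filter (fun t => g t = -1) := by simp [hiv]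
      have hc' : (Finset.univ.filter (fun t => g' t = -1)).card ≤ m := by
        have h1 := Finset.card_le_card hsub
        have h2 := Finset.card_erase_of_mem hmem
        have h3 := Finset.card_pos.mpr ⟨i, hmem⟩
        omega
      have hrec := ih g' hfirst' hc'
      have hdec : g = g' * Pi.mulSingle i (-1 : ℤˣ) := by
        rw [hg', mul_assoc, single_sq, mul_one]
      rw [hdec, map_mul]
      exact mul_mem hrec (inl_single_mem hin)

lemma inl_first_mem (g : Fin n → ℤˣ) (hg : ∀ t : Fin n, n - p ≤ (t : ℕ) → g t = 1) :
    SemidirectProduct.inl g ∈ Subgroup.closure (goodReflections n p) :=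
  inl_first_mem_aux (Finset.univ.filter (fun t => g t = -1)).card g hg (le_refl _)

lemma mPM_sq (i j : Fin n) : mPM n i j * mPM n i j = 1 := by
  funext t
  simp only [mPM, Pi.mul_apply, Pi.one_apply]
  by_cases h : t = i ∨ t = j <;> simp [h]

lemma inl_last_mem_aux :
    ∀ (m : ℕ) (h : Fin n → ℤˣ), (∀ t : Fin n, (t : ℕ) < n - p → h t = 1) →
      deltaP n p h = 1 → (Finset.univ.filter (fun t => h t = -1)).card ≤ m →
      SemidirectProduct.inl h ∈ Subgroup.closure (goodReflections n p) := by
  intro m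
  induction m with
  | zero =>
    intro h _ _ hc
    have h1 : h = 1 := by
      funext t
      rcases Int.units_eq_one_or (h t) with h' | h'
      · exact h'
      · exfalso
        have : t ∈ Finset.univ.filter (fun t => h t = -1) := by simp [h']
        have := Finset.card_pos.mpr ⟨t, this⟩
        omega
    rw [h1, map_one]; exact one_mem _
  | succ m ih =>
    intro h hfirst hdel hc
    by_cases hemp : (Finset.univ.filter (fun t => h t = -1)) = ∅
    · have h1 : h = 1 := by
        funext t
        rcases Int.units_eq_one_or (h t) with h' | h'
        · exact h'
        · exfalso
          have : t ∈ Finset.univ.filter (fun t => h t = -1) := by simp [h']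
          rw [hemp] at this
          exact absurd this (Finset.notMem_empty t)
      rw [h1, map_one]; exact one_mem _
    · obtain ⟨i, hi⟩ := Finset.nonempty_iff_ne_empty.mpr hemp
      have hiv : h i = -1 := by simpa using hi
      have hin : n - p ≤ (i : ℕ) := by
        by_contra hc'
        rw [hfirst i (by omega)] at hiv
        exact neg_one_ne_one hiv.symm
      by_cases hex : ∃ j, j ≠ i ∧ h j = -1
      · obtain ⟨j, hji, hjv⟩ := hex
        have hjn : n - p ≤ (j : ℕ) := by
          by_contra hc'
          rw [hfirst j (by omega)] at hjv
          exact neg_one_ne_one hjv.symm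
        have hij : i ≠ j := Ne.symm hji
        have hsb : sameBlock n p i j := Or.inr ⟨hin, hjn⟩
        set h' := h * mPM n i j with hh'
        have hval : ∀ t : Fin n, h' t = if t = i ∨ t = j then h t * (-1) else h t := by
          intro t
          simp only [hh', Pi.mul_apply, mPM]
          by_cases ht : t = i ∨ t = j <;> simp [ht]
        have hfirst' : ∀ t : Fin n, (t : ℕ) < n - p → h' t = 1 := by
          intro t ht
          rw [hval t, if_neg, hfirst t ht]
          rintro (rfl | rfl) <;> omega
        have hdel' : deltaP n p h' = 1 := by
          rw [hh', deltaP_mul, hdel, (deltaP_mPM_iff i j hij).mpr hsb, one_mul]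
        have hsub : (Finset.univ.filter (fun t => h' t = -1)) ⊆
            (Finset.univ.filter (fun t => h t = -1)).erase i := by
          intro t ht
          simp only [Finset.mem_filter, Finset.mem_univ, true_and] at ht
          rw [hval t] at ht
          by_cases hti : t = i
          · exfalso; subst hti
            rw [if_pos (Or.inl rfl), hiv] at ht
            exact absurd ht (by decide)
          · by_cases htj : t = j
            · exfalso; subst htj
              rw [if_pos (Or.inr rfl), hjv] at ht
              exact absurd ht (by decide)
            · have hnt : ¬ (t = i ∨ t = j) := by tauto
              rw [if_neg hnt] at ht
              exact Finset.mem_erase.mpr ⟨hti, by simp [ht]⟩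
        have hmem : i ∈ Finset.univ.filter (fun t => h t = -1) := by simp [hiv]
        have hc' : (Finset.univ.filter (fun t => h' t = -1)).card ≤ m := by
          have h1 := Finset.card_le_card hsub
          have h2 := Finset.card_erase_of_mem hmem
          omega
        have hrec := ih h' hfirst' hdel' hc'
        have hdec : h = h' * mPM n i j := by
          rw [hh', mul_assoc, mPM_sq, mul_one]
        rw [hdec, map_mul]
        exact mul_mem hrec (inl_mPM_mem hij hsb)
      · exfalso
        push_neg at hex
        have h1 : h = Pi.mulSingle i (-1 : ℤˣ) := by
          funext t
          rw [Pi.mulSingle_apply]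
          by_cases ht : t = i
          · subst ht; rw [if_pos rfl, hiv]
          · rw [if_neg ht]
            rcases Int.units_eq_one_or (h t) with h' | h'
            · exact h'
            · exact absurd h' (hex t ht)
        rw [h1, mulSingle_eq_ite, deltaP_single, if_pos hin] at hdel
        exact neg_one_ne_one hdel

lemma bigSub_le_closure : bigSub n p ≤ Subgroup.closure (goodReflections n p) := by
  intro w hw
  obtain ⟨hb, he⟩ := mem_bigSub.mp hw
  set g := fun t : Fin n => if (t : ℕ) < n - p then w.left t else 1 with hg
  set h := fun t : Fin n => if n - p ≤ (t : ℕ) then w.left t else 1 with hh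
  have hgh : w.left = g * h := by
    funext t
    simp only [hg, hh, Pi.mul_apply]
    by_cases ht : (t : ℕ) < n - p
    · have h2 : ¬ n - p ≤ (t : ℕ) := by omega
      rw [if_pos ht, if_neg h2, mul_one]
    · have h2 : n - p ≤ (t : ℕ) := by omega
      rw [if_neg ht, if_pos h2, one_mul]
  have hdg : deltaP n p g = 1 := by
    unfold deltaP
    apply Finset.prod_eq_one
    intro j _
    by_cases hj : n - p ≤ (j : ℕ)
    · have h2 : ¬ (j : ℕ) < n - p := by omega
      rw [if_pos hj]; simp only [hg]; rw [if_neg h2]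
    · rw [if_neg hj]
  have hdh : deltaP n p h = 1 := by
    have := he
    rw [hgh, deltaP_mul, hdg, one_mul] at this
    exact this
  have h1 : SemidirectProduct.inl g ∈ Subgroup.closure (goodReflections n p) := by
    apply inl_first_mem
    intro t ht
    simp only [hg]
    have h2 : ¬ (t : ℕ) < n - p := by omega
    rw [if_neg h2]
  have h2 : SemidirectProduct.inl h ∈ Subgroup.closure (goodReflections n p) := by
    apply inl_last_mem_aux (Finset.univ.filter (fun t => h t = -1)).card h
    · intro t ht
      simp only [hh]
      have h2 : ¬ n - p ≤ (t : ℕ) := by omega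
      rw [if_neg h2]
    · exact hdh
    · exact le_refl _
  have h3 : SemidirectProduct.inr w.right ∈ Subgroup.closure (goodReflections n p) :=
    inr_mem_closure_aux (w.right).support.card w.right (le_refl _) hb
  have hdec : w = SemidirectProduct.inl g * SemidirectProduct.inl h *
      SemidirectProduct.inr w.right := by
    rw [← map_mul, ← hgh, SemidirectProduct.inl_left_mul_inr_right]
  rw [hdec]
  exact mul_mem (mul_mem h1 h2) h3

lemma closure_eq_bigSub : Subgroup.closure (goodReflections n p) = bigSub n p :=
  le_antisymm closure_le_bigSub bigSub_le_closure

end Aux4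
section Aux5

variable {n p : ℕ}

/-- The sign character on the stabilizer: product of the signs on the last block. -/
def stabChar (n p : ℕ) : MulAction.stabilizer (W n) (deltaP n p) →* ℤˣ where
  toFun w := deltaP n p w.1.left
  map_one' := by
    show deltaP n p (1 : W n).left = 1
    rw [SemidirectProduct.one_left]
    exact deltaP_one
  map_mul' a b := by
    have ha : pbp n p (a.1.right) := (mem_stabilizer_iff_bp a.1).mp a.2
    show deltaP n p ((a.1 * b.1).left) = _
    rw [SemidirectProduct.mul_left, deltaP_mul, deltaP_permHom ha]

lemma stabChar_surjective (hp1 : 1 ≤ p) (hpn : p ≤ n) :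
    Function.Surjective (stabChar n p) := by
  intro u
  rcases Int.units_eq_one_or u with rfl | rfl
  · exact ⟨1, map_one _⟩
  · have hn : 0 < n := lt_of_lt_of_le hp1 hpn
    set k : Fin n := ⟨n - 1, by omega⟩ with hkdef
    have hk : n - p ≤ (k : ℕ) := by
      simp only [hkdef]
      omega
    refine ⟨⟨SemidirectProduct.inl (Pi.mulSingle k (-1 : ℤˣ)), ?_⟩, ?_⟩
    · rw [mem_stabilizer_iff_bp, blockPreserving_iff, SemidirectProduct.right_inl]
      exact pbp_one
    · show deltaP n p (SemidirectProduct.inl (Pi.mulSingle k (-1 : ℤˣ)) :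
        W n).left = -1
      rw [SemidirectProduct.left_inl, mulSingle_eq_ite, deltaP_single, if_pos hk]

lemma ker_stabChar :
    (stabChar n p).ker = (Subgroup.closure (goodReflections n p)).subgroupOf
      (MulAction.stabilizer (W n) (deltaP n p)) := by
  ext w
  rw [MonoidHom.mem_ker, Subgroup.mem_subgroupOf, closure_eq_bigSub]
  have hbp : pbp n p (w.1.right) := (mem_stabilizer_iff_bp w.1).mp w.2
  constructor
  · intro h
    exact mem_bigSub.mpr ⟨hbp, h⟩
  · intro h
    exact (mem_bigSub.mp h).2

lemma index_eq_two (hp1 : 1 ≤ p) (hpn : p ≤ n) :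
    ((Subgroup.closure (goodReflections n p)).subgroupOf
      (MulAction.stabilizer (W n) (deltaP n p))).index = 2 := by
  rw [← ker_stabChar, Subgroup.index_ker,
    MonoidHom.range_eq_top_of_surjective _ (stabChar_surjective hp1 hpn),
    Subgroup.card_top]
  rw [Nat.card_eq_fintype_card]
  decide

end Aux5

/-- For `W = S_n ⋉ (ℤ/2ℤ)ⁿ` of type `C_n` and `δ_p` the product of the last `p`
coordinates of `M = (ℤ/2ℤ)ⁿ` (`1 ≤ p ≤ n`):
`δ_p(m_{ε_i±ε_j}) = 1` iff `i, j` lie in the same block, and `δ_p(m_{2ε_k}) = 1` iff `k`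
lies in the first block; hence the good roots for `δ_p` are
`{±ε_i±ε_j}_{i<j≤n−p} ∪ {±2ε_k}_{k≤n−p} ∪ {±ε_i±ε_j}_{n−p<i<j}` (type `C_{n−p}+D_p`);
the group `W_{δ_p}⁰ = W(Δ_{δ_p})` equals `W(C_{n−p}) × W(D_p)` (block-preserving signed
permutations with an even number of sign changes on the last block); the stabilizer
`W_{δ_p}` equals `W(C_{n−p}) × W(C_p)` (block-preserving signed permutations); and the
R-group `R_{δ_p} = W_{δ_p}/W_{δ_p}⁰` is isomorphic to `ℤ/2ℤ` (i.e. `W_{δ_p}⁰` has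
index `2` in `W_{δ_p}`). -/
theorem good_roots_and_Rgroup_for_deltaP (n p : ℕ) (hp1 : 1 ≤ p) (hpn : p ≤ n) :
    (∀ i j : Fin n, i < j →
        (deltaP n p (mPM n i j) = 1 ↔ sameBlock n p i j)) ∧
    (∀ k : Fin n, deltaP n p (mLong n k) = 1 ↔ (k : ℕ) < n - p) ∧
    ({v ∈ CRoots n | deltaP n p (mOf n v) = 1} = explicitGoodRoots n p) ∧
    ((Subgroup.closure (goodReflections n p) : Set (W n)) =
        {w : W n | blockPreserving n p w ∧ evenLastSigns n p w}) ∧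
    ((MulAction.stabilizer (W n) (deltaP n p) : Set (W n)) =
        {w : W n | blockPreserving n p w}) ∧
    (Subgroup.closure (goodReflections n p) ≤
        MulAction.stabilizer (W n) (deltaP n p)) ∧
    ((Subgroup.closure (goodReflections n p)).subgroupOf
        (MulAction.stabilizer (W n) (deltaP n p))).index = 2 := by

  refine ⟨?_, ?_, ?_, ?_, ?_, ?_, ?_⟩
  · intro i j hij
    exact deltaP_mPM_iff i j (Fin.ne_of_lt hij)
  · intro k
    exact deltaP_mLong_iff k
  · exact goodSet_eq hp1 hpn
  · rw [closure_eq_bigSub]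
    rfl
  · ext w
    simp only [SetLike.mem_coe, Set.mem_setOf_eq]
    exact mem_stabilizer_iff_bp w
  · intro w hw
    exact (mem_stabilizer_iff_bp w).mpr (closure_le_bigSub hw).1
  · exact index_eq_two hp1 hpn

end Sp2n
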